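/- arXiv:1212.6462 — 2 statements merged into one kernel-verified Lean document; each statement's English description precedes it below -/
import Mathlib

section
/- The set C_n of partial cyclic shifts is closed under composition and inverses, hence is an inverse subsemigroup of R_n. -/
/-- The rook monoid `R_n`: injective partial functions on `Fin n`. -/
abbrev PartialInj (n : ℕ) :=
  {f : Fin n → Option (Fin n) // ∀ a b c : Fin n, f a = some c → f b = some c → a = b}

/-- Composition in `R_n`: `pcomp f g` applies `g` first, then `f`. -/
def pcomp {n : ℕ} (f g : PartialInj n) : PartialInj n :=
  ⟨fun a => (g.1 a).bind f.1, by
    intro a b c ha hb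
    rcases Option.bind_eq_some_iff.mp ha with ⟨a', ha1, ha2⟩
    rcases Option.bind_eq_some_iff.mp hb with ⟨b', hb1, hb2⟩
    have h := f.2 a' b' c ha2 hb2
    subst h
    exact g.2 a b a' ha1 hb1⟩

/-- The inverse of a partial injection. -/
noncomputable def pinv {n : ℕ} (f : PartialInj n) : PartialInj n :=
  ⟨fun b => if h : ∃ a, f.1 a = some b then some h.choose else none, by
    intro a b c ha hb
    dsimp only at ha hb
    split_ifs at ha hb with h1 h2
    · have sa := h1.choose_spec
      have sb := h2.choose_spec
      rw [Option.some_inj] at ha hb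
      rw [ha] at sa; rw [hb] at sb
      exact Option.some_inj.mp (sa.symm.trans sb)⟩

/-- The domain of a partial injection, as a finset. -/
def domFinset {n : ℕ} (f : PartialInj n) : Finset (Fin n) :=
  Finset.univ.filter fun a => (f.1 a).isSome

/-- The range of a partial injection, as a finset. -/
def ranFinset {n : ℕ} (f : PartialInj n) : Finset (Fin n) :=
  Finset.univ.filter fun b => ∃ a, f.1 a = some b

/-- `σ` is a cyclic shift from its domain `{s_1 < ... < s_k}` to its range
`{t_1 < ... < t_k}`: for some `j`, `σ(s_r) = t_{(j + r) mod k}`. -/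
def IsCyclicShift {n : ℕ} (σ : PartialInj n) : Prop :=
  ∃ (k : ℕ) (hD : (domFinset σ).card = k) (hR : (ranFinset σ).card = k) (j : ℕ),
    ∀ r : Fin k, σ.1 ((domFinset σ).orderIsoOfFin hD r : Fin n) =
      some (((ranFinset σ).orderIsoOfFin hR ⟨(j + r.1) % k, Nat.mod_lt _ r.pos⟩ : Fin n))

def NBtw (x y z : ℕ) : Prop := (x < y ∧ y < z) ∨ (y < z ∧ z < x) ∨ (z < x ∧ x < y)

lemma nbtw_congr {a b c a' b' c' : ℕ} (h1 : a < b ↔ a' < b') (h2 : b < c ↔ b' < c')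
    (h3 : c < a ↔ c' < a') : (NBtw a b c ↔ NBtw a' b' c') := by
  unfold NBtw; rw [h1, h2, h3]

lemma mod_two_cases {y k : ℕ} (h : y < 2 * k) (hk : 0 < k) : y % k = y ∨ y % k + k = y := by
  rcases lt_or_ge y k with h' | h'
  · left; exact Nat.mod_eq_of_lt h'
  · right; rw [Nat.mod_eq_sub_mod h', Nat.mod_eq_of_lt (by omega)]; omega

lemma nbtw_rot {k : ℕ} (j : ℕ) {a b c : ℕ} (ha : a < k) (hb : b < k) (hc : c < k) :
    NBtw ((j + a) % k) ((j + b) % k) ((j + c) % k) ↔ NBtw a b c := by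
  have hk : 0 < k := by omega
  have key : ∀ x, x < k →
      ((j + x) % k = j % k + x ∨ (j + x) % k + k = j % k + x) ∧ (j + x) % k < k := by
    intro x hx
    have h1 : (j + x) % k = (j % k + x) % k := by rw [Nat.add_mod, Nat.mod_eq_of_lt hx]
    have hjk : j % k < k := Nat.mod_lt _ hk
    refine ⟨?_, Nat.mod_lt _ hk⟩
    rw [h1]
    exact mod_two_cases (by omega) hk
  obtain ⟨hA, hA'⟩ := key a ha
  obtain ⟨hB, hB'⟩ := key b hb
  obtain ⟨hC, hC'⟩ := key c hc
  unfold NBtw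
  omega

lemma rotation_of_pres {k : ℕ} (hk : 0 < k) (g : Fin k → Fin k) (hinj : Function.Injective g)
    (hg : ∀ r s t : Fin k, NBtw r.1 s.1 t.1 → NBtw (g r).1 (g s).1 (g t).1) :
    ∀ r : Fin k, (g r).1 = ((g ⟨0, hk⟩).1 + r.1) % k := by
  have hsurj : Function.Surjective g := Finite.surjective_of_injective hinj
  have step : ∀ r r' : Fin k, r'.1 = r.1 + 1 → (g r').1 = ((g r).1 + 1) % k := by
    intro r r' hrr'
    by_contra hne
    obtain ⟨s, hs⟩ := hsurj ⟨((g r).1 + 1) % k, Nat.mod_lt _ hk⟩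
    have hsv : (g s).1 = ((g r).1 + 1) % k := by rw [hs]
    have hmod : ((g r).1 + 1) % k = (g r).1 + 1 ∨ ((g r).1 + 1) % k + k = (g r).1 + 1 :=
      mod_two_cases (by have := (g r).2; omega) hk
    have hZG : g r' ≠ g r := by
      intro h; have h2 := hinj h; rw [h2] at hrr'; omega
    have hZG' : (g r').1 ≠ (g r).1 := fun h => hZG (Fin.ext h)
    have hsr : s.1 ≠ r.1 := by
      intro h
      have h2 : s = r := Fin.ext h
      rw [h2] at hsv
      have := (g r).2; have := r'.2; omega
    have hsr' : s.1 ≠ r'.1 := by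
      intro h
      have h2 : s = r' := Fin.ext h
      rw [h2] at hsv
      exact hne hsv
    have hbtw : NBtw r.1 r'.1 s.1 := by
      unfold NBtw; have := s.2; have := r'.2; omega
    have key := hg r r' s hbtw
    unfold NBtw at key
    have h1 := (g r).2; have h2 := (g r').2
    omega
  intro r
  obtain ⟨m, hm⟩ := r
  induction m with
  | zero => simp [Nat.mod_eq_of_lt (g ⟨0, hk⟩).2]
  | succ p ih =>
    have hp : p < k := by omega
    rw [step ⟨p, hp⟩ ⟨p + 1, hm⟩ rfl, ih hp, Nat.mod_add_mod]
    simp only [Fin.val_mk]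
    congr 1

/-- preservation of cyclic betweenness -/
def Pres {n : ℕ} (σ : PartialInj n) : Prop :=
  ∀ a b c a' b' c' : Fin n, σ.1 a = some a' → σ.1 b = some b' → σ.1 c = some c' →
    NBtw a.1 b.1 c.1 → NBtw a'.1 b'.1 c'.1

lemma mem_dom {n : ℕ} {σ : PartialInj n} {a b : Fin n} (h : σ.1 a = some b) :
    a ∈ domFinset σ := by simp [domFinset, h]

lemma mem_ran {n : ℕ} {σ : PartialInj n} {a b : Fin n} (h : σ.1 a = some b) :
    b ∈ ranFinset σ := by
  simp only [ranFinset, Finset.mem_filter, Finset.mem_univ, true_and]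
  exact ⟨a, h⟩

lemma dom_some {n : ℕ} {σ : PartialInj n} {a : Fin n} (h : a ∈ domFinset σ) :
    ∃ b, σ.1 a = some b := by
  simp only [domFinset, Finset.mem_filter, Finset.mem_univ, true_and] at h
  exact Option.isSome_iff_exists.mp h

lemma ran_exists {n : ℕ} {σ : PartialInj n} {b : Fin n} (h : b ∈ ranFinset σ) :
    ∃ a, σ.1 a = some b := by
  simpa only [ranFinset, Finset.mem_filter, Finset.mem_univ, true_and] using h

lemma card_ran {n : ℕ} (σ : PartialInj n) : (ranFinset σ).card = (domFinset σ).card := by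
  symm
  apply Finset.card_bij (fun a ha => (dom_some ha).choose)
  · intro a ha
    exact mem_ran (dom_some ha).choose_spec
  · intro a ha a' ha' h
    have h1 := (dom_some ha).choose_spec
    have h2 := (dom_some ha').choose_spec
    rw [h] at h1
    exact σ.2 a a' _ h1 h2
  · intro b hb
    obtain ⟨a, hab⟩ := ran_exists hb
    refine ⟨a, mem_dom hab, ?_⟩
    have h1 := (dom_some (mem_dom hab)).choose_spec
    exact Option.some_inj.mp (h1.symm.trans hab)

lemma oif_lt {n k : ℕ} (s : Finset (Fin n)) (h : s.card = k) (r t : Fin k) :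
    (s.orderIsoOfFin h r : Fin n).1 < (s.orderIsoOfFin h t : Fin n).1 ↔ r.1 < t.1 := by
  rw [← Fin.lt_def, ← Fin.lt_def, Subtype.coe_lt_coe, OrderIso.lt_iff_lt]

lemma cyclic_iff {n : ℕ} (σ : PartialInj n) : IsCyclicShift σ ↔ Pres σ := by
  constructor
  · rintro ⟨k, hD, hR, j, hσ⟩ a b c a' b' c' ha hb hc habc
    obtain ⟨ra, hea⟩ : ∃ r : Fin k, ((domFinset σ).orderIsoOfFin hD r : Fin n) = a :=
      ⟨((domFinset σ).orderIsoOfFin hD).symm ⟨a, mem_dom ha⟩, by simp⟩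
    obtain ⟨rb, heb⟩ : ∃ r : Fin k, ((domFinset σ).orderIsoOfFin hD r : Fin n) = b :=
      ⟨((domFinset σ).orderIsoOfFin hD).symm ⟨b, mem_dom hb⟩, by simp⟩
    obtain ⟨rc, hec⟩ : ∃ r : Fin k, ((domFinset σ).orderIsoOfFin hD r : Fin n) = c :=
      ⟨((domFinset σ).orderIsoOfFin hD).symm ⟨c, mem_dom hc⟩, by simp⟩
    have hva := hσ ra; rw [hea, ha] at hva
    have hvb := hσ rb; rw [heb, hb] at hvb
    have hvc := hσ rc; rw [hec, hc] at hvc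
    have ha' := Option.some_inj.mp hva
    have hb' := Option.some_inj.mp hvb
    have hc' := Option.some_inj.mp hvc
    rw [ha', hb', hc']
    rw [nbtw_congr (oif_lt _ hR _ _) (oif_lt _ hR _ _) (oif_lt _ hR _ _)]
    rw [show (⟨(j + ra.1) % k, Nat.mod_lt _ ra.pos⟩ : Fin k).1 = (j + ra.1) % k from rfl]
    rw [show (⟨(j + rb.1) % k, Nat.mod_lt _ rb.pos⟩ : Fin k).1 = (j + rb.1) % k from rfl]
    rw [show (⟨(j + rc.1) % k, Nat.mod_lt _ rc.pos⟩ : Fin k).1 = (j + rc.1) % k from rfl]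
    rw [nbtw_rot j ra.2 rb.2 rc.2]
    rw [← nbtw_congr (oif_lt _ hD ra rb) (oif_lt _ hD rb rc) (oif_lt _ hD rc ra)]
    rw [hea, heb, hec]
    exact habc
  · intro hp
    rcases Nat.eq_zero_or_pos (domFinset σ).card with h0 | hpos
    · exact ⟨0, h0, by rw [card_ran]; exact h0, 0, fun r => r.elim0⟩
    · have hR : (ranFinset σ).card = (domFinset σ).card := card_ran σ
      set k := (domFinset σ).card with hkdef
      have hout : ∀ r : Fin k, ∃ s : Fin k,
          σ.1 ((domFinset σ).orderIsoOfFin rfl r : Fin n) =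
            some ((ranFinset σ).orderIsoOfFin hR s : Fin n) := by
        intro r
        obtain ⟨b, hbeq⟩ := dom_some ((domFinset σ).orderIsoOfFin rfl r).2
        refine ⟨((ranFinset σ).orderIsoOfFin hR).symm ⟨b, mem_ran hbeq⟩, ?_⟩
        rw [hbeq]
        congr 1
        simp
      choose g hg using hout
      have hinj : Function.Injective g := by
        intro r s h
        have h1 := hg r
        have h2 := hg s
        rw [h] at h1
        have h3 := σ.2 _ _ _ h1 h2
        have h4 : ((domFinset σ).orderIsoOfFin rfl r) = ((domFinset σ).orderIsoOfFin rfl s) :=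
          Subtype.coe_injective h3
        exact ((domFinset σ).orderIsoOfFin rfl).injective h4
      have hpres : ∀ r s t : Fin k, NBtw r.1 s.1 t.1 → NBtw (g r).1 (g s).1 (g t).1 := by
        intro r s t h
        rw [← nbtw_congr (oif_lt _ hR (g r) (g s)) (oif_lt _ hR (g s) (g t))
          (oif_lt _ hR (g t) (g r))]
        apply hp _ _ _ _ _ _ (hg r) (hg s) (hg t)
        rw [nbtw_congr (oif_lt _ rfl r s) (oif_lt _ rfl s t) (oif_lt _ rfl t r)]
        exact h
      have hrot := rotation_of_pres hpos g hinj hpres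
      refine ⟨k, rfl, hR, (g ⟨0, hpos⟩).1, fun r => ?_⟩
      have he : g r = (⟨((g ⟨0, hpos⟩).1 + r.1) % k, Nat.mod_lt _ r.pos⟩ : Fin k) :=
        Fin.ext (hrot r)
      rw [hg r, he]

lemma pinv_some {n : ℕ} {σ : PartialInj n} {b a : Fin n} (h : (pinv σ).1 b = some a) :
    σ.1 a = some b := by
  simp only [pinv] at h
  split_ifs at h with h1
  · have hs := h1.choose_spec
    rwa [Option.some_inj.mp h] at hs

lemma nbtw_ne {x y z : ℕ} (h : NBtw x y z) : x ≠ y ∧ y ≠ z ∧ z ≠ x ∧ ¬ NBtw x z y := by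
  unfold NBtw at *; omega

/-- The set `C_n` of partial cyclic shifts is closed under composition and inverses,
hence is an inverse subsemigroup of `R_n`. -/
theorem stmt13 (n : ℕ) :
    (∀ σ τ : PartialInj n, IsCyclicShift σ → IsCyclicShift τ →
      IsCyclicShift (pcomp σ τ)) ∧
    (∀ σ : PartialInj n, IsCyclicShift σ → IsCyclicShift (pinv σ)) := by
  constructor
  · intro σ τ hσ hτ
    rw [cyclic_iff] at hσ hτ ⊢
    intro a b c a' b' c' ha hb hc habc
    obtain ⟨ma, ha1, ha2⟩ := Option.bind_eq_some_iff.mp ha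
    obtain ⟨mb, hb1, hb2⟩ := Option.bind_eq_some_iff.mp hb
    obtain ⟨mc, hc1, hc2⟩ := Option.bind_eq_some_iff.mp hc
    exact hσ _ _ _ _ _ _ ha2 hb2 hc2 (hτ _ _ _ _ _ _ ha1 hb1 hc1 habc)
  · intro σ hσ
    rw [cyclic_iff] at hσ ⊢
    intro a b c a' b' c' ha hb hc habc
    have ha2 : σ.1 a' = some a := pinv_some ha
    have hb2 : σ.1 b' = some b := pinv_some hb
    have hc2 : σ.1 c' = some c := pinv_some hc
    obtain ⟨hab, hbc, hca, -⟩ := nbtw_ne habc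
    have nab : a'.1 ≠ b'.1 := by
      intro h
      rw [(Fin.ext h : a' = b')] at ha2
      exact hab (congrArg Fin.val (Option.some_inj.mp (ha2.symm.trans hb2)))
    have nbc : b'.1 ≠ c'.1 := by
      intro h
      rw [(Fin.ext h : b' = c')] at hb2
      exact hbc (congrArg Fin.val (Option.some_inj.mp (hb2.symm.trans hc2)))
    have nca : c'.1 ≠ a'.1 := by
      intro h
      rw [(Fin.ext h : c' = a')] at hc2
      exact hca (congrArg Fin.val (Option.some_inj.mp (hc2.symm.trans ha2)))
    by_contra hn
    have h2 : NBtw a'.1 c'.1 b'.1 := by unfold NBtw at hn ⊢; omega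
    exact (nbtw_ne habc).2.2.2 (hσ _ _ _ _ _ _ ha2 hc2 hb2 h2)
end

section
/- The partial cyclic shift monoid C_n has cardinality 1 + Σ_{k=1}^{n} C(n,k)² · k. -/
-- arithmetic helpers
lemma mod_shift_inj {k j r r' : ℕ} (hr : r < k) (hr' : r' < k)
    (h : (j + r) % k = (j + r') % k) : r = r' := by
  have h2 : r % k = r' % k := Nat.ModEq.add_left_cancel' j h
  rwa [Nat.mod_eq_of_lt hr, Nat.mod_eq_of_lt hr'] at h2

lemma mod_shift_solve {k j i : ℕ} (hi : i < k) :
    (j + (i + (k - j % k)) % k) % k = i := by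
  have hk : 0 < k := by omega
  have hjk : j % k < k := Nat.mod_lt _ hk
  rw [Nat.add_mod_mod]
  have hdm := Nat.div_add_mod j k
  have hmul : k * (j / k + 1) = k * (j / k) + k := by ring
  have e : j + (i + (k - j % k)) = i + k * (j / k + 1) := by omega
  rw [e, Nat.add_mul_mod_self_left, Nat.mod_eq_of_lt hi]

/-- the underlying function of the partial injection with domain `S`, range `T`, shift `j`. -/
def mkShiftFun {n : ℕ} (S T : Finset (Fin n)) (h : T.card = S.card) (j : ℕ)
    (a : Fin n) : Option (Fin n) :=
  if ha : a ∈ S then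
    some ((T.orderIsoOfFin h ⟨(j + ((S.orderIsoOfFin rfl).symm ⟨a, ha⟩ : Fin S.card).1) % S.card,
      Nat.mod_lt _ (Finset.card_pos.mpr ⟨a, ha⟩)⟩ : T) : Fin n) else none

lemma mkShiftFun_inj {n : ℕ} (S T : Finset (Fin n)) (h : T.card = S.card) (j : ℕ) :
    ∀ a b c : Fin n, mkShiftFun S T h j a = some c → mkShiftFun S T h j b = some c → a = b := by
  intro a b c hac hbc
  unfold mkShiftFun at hac hbc
  by_cases ha : a ∈ S
  · by_cases hb : b ∈ S
    · simp only [dif_pos ha, dif_pos hb, Option.some.injEq] at hac hbc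
      rw [← hbc] at hac
      have h1 := Subtype.coe_injective hac
      have h2 := (T.orderIsoOfFin h).injective h1
      have h3 : ((j + ((S.orderIsoOfFin rfl).symm ⟨a, ha⟩ : Fin S.card).1) % S.card)
          = ((j + ((S.orderIsoOfFin rfl).symm ⟨b, hb⟩ : Fin S.card).1) % S.card) :=
        congrArg Fin.val h2
      have h4 := mod_shift_inj ((S.orderIsoOfFin rfl).symm ⟨a, ha⟩).isLt
        ((S.orderIsoOfFin rfl).symm ⟨b, hb⟩).isLt h3
      have h5 : ((S.orderIsoOfFin rfl).symm ⟨a, ha⟩ : Fin S.card)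
          = (S.orderIsoOfFin rfl).symm ⟨b, hb⟩ := Fin.ext h4
      have := (S.orderIsoOfFin rfl).symm.injective h5
      exact congrArg Subtype.val this
    · simp [dif_neg hb] at hbc
  · simp [dif_neg ha] at hac

/-- the partial injection with domain `S`, range `T`, shift `j`. -/
def mkShift {n : ℕ} (S T : Finset (Fin n)) (h : T.card = S.card) (j : ℕ) : PartialInj n :=
  ⟨mkShiftFun S T h j, mkShiftFun_inj S T h j⟩

lemma domFinset_mkShift {n : ℕ} (S T : Finset (Fin n)) (h : T.card = S.card) (j : ℕ) :
    domFinset (mkShift S T h j) = S := by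
  ext a
  simp only [domFinset, Finset.mem_filter, Finset.mem_univ, true_and, mkShift, mkShiftFun]
  by_cases ha : a ∈ S <;> simp [ha]

lemma ranFinset_mkShift {n : ℕ} (S T : Finset (Fin n)) (h : T.card = S.card) (j : ℕ) :
    ranFinset (mkShift S T h j) = T := by
  ext b
  simp only [ranFinset, Finset.mem_filter, Finset.mem_univ, true_and]
  constructor
  · rintro ⟨a, hab⟩
    by_cases ha : a ∈ S
    · simp only [mkShift, mkShiftFun, dif_pos ha, Option.some.injEq] at hab
      rw [← hab]; exact Subtype.coe_prop _
    · simp [mkShift, mkShiftFun, dif_neg ha] at hab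
  · intro hb
    have hk : 0 < S.card := h ▸ Finset.card_pos.mpr ⟨b, hb⟩
    set i : Fin S.card := (T.orderIsoOfFin h).symm ⟨b, hb⟩ with hi
    set r : ℕ := (i.1 + (S.card - j % S.card)) % S.card with hr
    have hrk : r < S.card := Nat.mod_lt _ hk
    refine ⟨(S.orderIsoOfFin rfl ⟨r, hrk⟩ : Fin n), ?_⟩
    have haS : ((S.orderIsoOfFin rfl ⟨r, hrk⟩ : Fin n)) ∈ S := Subtype.coe_prop _
    simp only [mkShift, mkShiftFun, dif_pos haS, Option.some.injEq]
    have hsy : (S.orderIsoOfFin rfl).symm ⟨(S.orderIsoOfFin rfl ⟨r, hrk⟩ : Fin n), haS⟩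
        = ⟨r, hrk⟩ := by
      apply (S.orderIsoOfFin rfl).injective
      apply Subtype.ext
      simp [Finset.coe_orderIsoOfFin_apply]
    have hv : ((S.orderIsoOfFin rfl).symm
        ⟨(S.orderIsoOfFin rfl ⟨r, hrk⟩ : Fin n), haS⟩ : Fin S.card).1 = r :=
      congrArg Fin.val hsy
    have harith : (j + r) % S.card = i.1 := mod_shift_solve i.isLt
    have hx : (⟨(j + ((S.orderIsoOfFin rfl).symm
        ⟨(S.orderIsoOfFin rfl ⟨r, hrk⟩ : Fin n), haS⟩ : Fin S.card).1) % S.card,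
        Nat.mod_lt _ (Finset.card_pos.mpr ⟨_, haS⟩)⟩ : Fin S.card) = i := by
      apply Fin.ext
      show (j + _) % S.card = i.1
      rw [hv]; exact harith
    rw [hx, hi]
    simp

lemma orderIso_symm_coe {α : Type*} [LinearOrder α] (S : Finset α) {k : ℕ} (hk : S.card = k)
    (r : Fin k) (hm : ((S.orderIsoOfFin hk r : α)) ∈ S) :
    (S.orderIsoOfFin hk).symm ⟨(S.orderIsoOfFin hk r : α), hm⟩ = r := by
  have : (⟨(S.orderIsoOfFin hk r : α), hm⟩ : S) = S.orderIsoOfFin hk r := Subtype.ext rfl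
  rw [this, OrderIso.symm_apply_apply]

lemma orderIso_congr {α : Type*} [LinearOrder α] {A B : Finset α} (hAB : A = B) {k : ℕ}
    (hA : A.card = k) (hB : B.card = k) (r : Fin k) :
    ((A.orderIsoOfFin hA r : α)) = ((B.orderIsoOfFin hB r : α)) := by
  subst hAB; rfl

lemma mkShift_apply {n : ℕ} (S T : Finset (Fin n)) (h : T.card = S.card) (j : ℕ)
    (r : Fin S.card) (hlt : (j + r.1) % S.card < S.card) :
    (mkShift S T h j).1 (S.orderIsoOfFin rfl r : Fin n) =
      some ((T.orderIsoOfFin h ⟨(j + r.1) % S.card, hlt⟩ : T) : Fin n) := by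
  have hm : ((S.orderIsoOfFin rfl r : Fin n)) ∈ S := Subtype.coe_prop _
  show mkShiftFun S T h j _ = _
  unfold mkShiftFun
  rw [dif_pos hm]
  congr 1
  refine congrArg (fun x => ((T.orderIsoOfFin h x : T) : Fin n)) (Fin.ext ?_)
  show (j + ((S.orderIsoOfFin rfl).symm ⟨_, hm⟩ : Fin S.card).1) % S.card = (j + r.1) % S.card
  rw [orderIso_symm_coe]

lemma mkShift_isCyclicShift {n : ℕ} (S T : Finset (Fin n)) (h : T.card = S.card) (j : ℕ) :
    IsCyclicShift (mkShift S T h j) := by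
  refine ⟨S.card, by rw [domFinset_mkShift], by rw [ranFinset_mkShift]; exact h, j, ?_⟩
  intro r
  rw [orderIso_congr (domFinset_mkShift S T h j) (by rw [domFinset_mkShift]) rfl r]
  rw [mkShift_apply S T h j r (Nat.mod_lt _ r.pos)]
  congr 1
  exact orderIso_congr (ranFinset_mkShift S T h j).symm h
    (by rw [ranFinset_mkShift]; exact h) _

def emptyPI (n : ℕ) : PartialInj n :=
  ⟨fun _ => none, fun a b c h => by simp at h⟩

lemma emptyPI_isCyclicShift (n : ℕ) : IsCyclicShift (emptyPI n) := by
  refine ⟨0, ?_, ?_, 0, fun r => r.elim0⟩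
  · simp [domFinset, emptyPI]
  · simp [ranFinset, emptyPI]

def Idx (n : ℕ) := Σ S : Finset (Fin n), {T : Finset (Fin n) // T.card = S.card} × Fin S.card

instance (n : ℕ) : Fintype (Idx n) := by unfold Idx; infer_instance

def F (n : ℕ) : Option (Idx n) → {σ : PartialInj n // IsCyclicShift σ}
  | none => ⟨emptyPI n, emptyPI_isCyclicShift n⟩
  | some ⟨S, T, j⟩ => ⟨mkShift S T.1 T.2 j.1, mkShift_isCyclicShift S T.1 T.2 j.1⟩

lemma domFinset_emptyPI (n : ℕ) : domFinset (emptyPI n) = ∅ := by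
  simp [domFinset, emptyPI]

lemma sigma_eq_of_pi_eq {n : ℕ} (S : Finset (Fin n)) (T T' : Finset (Fin n))
    (hT : T.card = S.card) (hT' : T'.card = S.card) (j j' : Fin S.card)
    (hσ : mkShift S T hT j.1 = mkShift S T' hT' j'.1) : T = T' ∧ j = j' := by
  have hTT : T = T' := by
    rw [← ranFinset_mkShift S T hT j.1, hσ, ranFinset_mkShift]
  subst hTT
  refine ⟨rfl, ?_⟩
  have hpos : 0 < S.card := j.pos
  have e1 := mkShift_apply S T hT j.1 ⟨0, hpos⟩ (Nat.mod_lt _ hpos)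
  have e2 := mkShift_apply S T hT' j'.1 ⟨0, hpos⟩ (Nat.mod_lt _ hpos)
  rw [hσ, e2] at e1
  have h1 := Subtype.coe_injective (Option.some_injective _ e1.symm)
  have h2 := (T.orderIsoOfFin hT').injective h1
  have hv := congrArg Fin.val h2
  simp only [Nat.add_zero] at hv
  apply Fin.ext
  rw [← Nat.mod_eq_of_lt j.isLt, ← Nat.mod_eq_of_lt j'.isLt]
  exact hv
  -- hv : j.1 % S.card = j'.1 % S.card  (since +0)

lemma F_injective (n : ℕ) : Function.Injective (F n) := by
  intro x y hxy
  cases x with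
  | none =>
    cases y with
    | none => rfl
    | some i =>
      obtain ⟨S, ⟨T, hT⟩, j⟩ := i
      exfalso
      have hd := congrArg (fun z : {σ : PartialInj n // IsCyclicShift σ} => domFinset z.1) hxy
      simp only [F] at hd
      rw [domFinset_emptyPI, domFinset_mkShift] at hd
      have := j.pos
      rw [← hd] at this
      simp at this
  | some i =>
    cases y with
    | none =>
      obtain ⟨S, ⟨T, hT⟩, j⟩ := i
      exfalso
      have hd := congrArg (fun z : {σ : PartialInj n // IsCyclicShift σ} => domFinset z.1) hxy
      simp only [F] at hd
      rw [domFinset_emptyPI, domFinset_mkShift] at hd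
      have := j.pos
      rw [hd] at this
      simp at this
    | some i' =>
      obtain ⟨S, ⟨T, hT⟩, j⟩ := i
      obtain ⟨S', ⟨T', hT'⟩, j'⟩ := i'
      have hσ : mkShift S T hT j.1 = mkShift S' T' hT' j'.1 := congrArg (fun z => z.1) hxy
      have hS : S = S' := by
        rw [← domFinset_mkShift S T hT j.1, hσ, domFinset_mkShift]
      subst hS
      obtain ⟨hTT, hj⟩ := sigma_eq_of_pi_eq S T T' hT hT' j j' hσ
      subst hTT; subst hj
      rfl

lemma F_surjective (n : ℕ) : Function.Surjective (F n) := by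
  rintro ⟨σ, hσ⟩
  obtain ⟨k, hD, hR, j, hval⟩ := hσ
  subst hD
  rcases Nat.eq_zero_or_pos (domFinset σ).card with h0 | hpos
  · refine ⟨none, ?_⟩
    apply Subtype.ext
    apply Subtype.ext
    funext a
    have ha : a ∉ domFinset σ := by
      rw [Finset.card_eq_zero.mp h0]; exact Finset.notMem_empty a
    simp only [domFinset, Finset.mem_filter, Finset.mem_univ, true_and,
      Option.isSome_iff_exists, not_exists] at ha
    show (none : Option (Fin n)) = σ.1 a
    cases hcase : σ.1 a with
    | none => rfl
    | some b => exact absurd hcase (by simpa using ha b)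
  · refine ⟨some ⟨domFinset σ, ⟨ranFinset σ, hR⟩, ⟨j % _, Nat.mod_lt _ hpos⟩⟩, ?_⟩
    apply Subtype.ext
    show mkShift (domFinset σ) (ranFinset σ) hR (j % (domFinset σ).card) = σ
    apply Subtype.ext
    funext a
    by_cases ha : a ∈ domFinset σ
    · set r : Fin (domFinset σ).card := ((domFinset σ).orderIsoOfFin rfl).symm ⟨a, ha⟩ with hrdef
      have hav : a = ((domFinset σ).orderIsoOfFin rfl r : Fin n) := by
        rw [hrdef, OrderIso.apply_symm_apply]
      rw [hav, mkShift_apply _ _ _ _ r (Nat.mod_lt _ hpos), hval r]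
      congr 1
      refine congrArg (fun x => (((ranFinset σ).orderIsoOfFin hR x : (ranFinset σ : Finset (Fin n))) : Fin n)) (Fin.ext ?_)
      show (j % (domFinset σ).card + r.1) % (domFinset σ).card = (j + r.1) % (domFinset σ).card
      rw [Nat.mod_add_mod]
    · show mkShiftFun _ _ _ _ a = σ.1 a
      rw [mkShiftFun, dif_neg ha]
      simp only [domFinset, Finset.mem_filter, Finset.mem_univ, true_and,
        Option.isSome_iff_exists, not_exists] at ha
      cases hcase : σ.1 a with
      | none => rfl
      | some b => exact absurd hcase (by simpa using ha b)

lemma card_Idx (n : ℕ) :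
    Fintype.card (Idx n) = ∑ k ∈ Finset.Icc 1 n, n.choose k ^ 2 * k := by
  have h1 : Fintype.card (Idx n)
      = ∑ S : Finset (Fin n), n.choose S.card * S.card := by
    rw [show Fintype.card (Idx n) = ∑ S : Finset (Fin n),
        Fintype.card ({T : Finset (Fin n) // T.card = S.card} × Fin S.card) from
      Fintype.card_sigma]
    refine Finset.sum_congr rfl fun S _ => ?_
    rw [Fintype.card_prod, Fintype.card_finset_len, Fintype.card_fin, Fintype.card_fin]
  rw [h1]
  have h2 : ∑ S : Finset (Fin n), n.choose S.card * S.card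
      = ∑ S ∈ (Finset.univ : Finset (Fin n)).powerset,
          n.choose S.card * S.card := by
    rw [Finset.powerset_univ]
  rw [h2, Finset.sum_powerset_apply_card (fun m => n.choose m * m)]
  simp only [Finset.card_univ, Fintype.card_fin, smul_eq_mul]
  have h3 : Finset.range (n + 1) = insert 0 (Finset.Icc 1 n) := by
    ext x; simp [Finset.mem_range, Finset.mem_Icc]; omega
  rw [h3, Finset.sum_insert (by simp)]
  simp only [Nat.mul_zero, Nat.zero_add]
  exact Finset.sum_congr rfl fun k _ => by ring

/-- The partial cyclic shift monoid `C_n` has cardinality `1 + ∑_{k=1}^{n} C(n,k)² k`. -/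
theorem stmt14 (n : ℕ) :
    Nat.card {σ : PartialInj n // IsCyclicShift σ} =
      1 + ∑ k ∈ Finset.Icc 1 n, n.choose k ^ 2 * k := by
  rw [← Nat.card_eq_of_bijective (F n) ⟨F_injective n, F_surjective n⟩,
    Nat.card_eq_fintype_card, Fintype.card_option, card_Idx]
  omega
end
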